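/- arXiv:2212.07760 — 3 statements merged into one kernel-verified Lean document; each statement's English description precedes it below -/
import Mathlib

section
/- Let n ≥ 3, s ∈ (0,1), U the Aubin-Talenti function with ‖U‖_{HL} = 1, and for t > 0, x₀ ∈ ℝ^n set V_{t,x₀}(x) = t^{(2-n)/2} U((x-x₀)/t). Then ‖V_{t,x₀}‖_{HL} = 1 and G(V_{t,x₀})² = ‖∇U‖_{L²}² + t^{2-2s}[U]_s². Consequently G(V_{t,x₀})² → S_{H,L,C} as t → 0⁺. -/
open MeasureTheory Filter

/-- Dirichlet energy `‖∇u‖_{L²(ℝⁿ)}²`. -/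
noncomputable def grad2 {n : ℕ} (u : EuclideanSpace ℝ (Fin n) → ℝ) : ℝ :=
  ∫ x, ‖fderiv ℝ u x‖ ^ 2

/-- Gagliardo seminorm squared `[u]_s² = (C(n,s)/2)∫∫ |u(x)-u(y)|²/|x-y|^{n+2s}`. -/
noncomputable def gagliardo2 {n : ℕ} (s Cns : ℝ) (u : EuclideanSpace ℝ (Fin n) → ℝ) : ℝ :=
  Cns / 2 * ∫ x, ∫ y, |u x - u y| ^ 2 / ‖x - y‖ ^ ((n : ℝ) + 2 * s)

/-- Hardy-Littlewood (Choquard) norm squared. -/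
noncomputable def hlNorm2 {n : ℕ} (μ : ℝ) (u : EuclideanSpace ℝ (Fin n) → ℝ) : ℝ :=
  (∫ x, ∫ y, |u x| ^ ((2 * (n : ℝ) - μ) / ((n : ℝ) - 2)) *
      |u y| ^ ((2 * (n : ℝ) - μ) / ((n : ℝ) - 2)) / ‖x - y‖ ^ μ)
    ^ (((n : ℝ) - 2) / (2 * (n : ℝ) - μ))

/-- The rescaled bubble `V_{t,x₀}(x) = t^{(2-n)/2} U((x-x₀)/t)`. -/
noncomputable def bubbleV {n : ℕ} (U : EuclideanSpace ℝ (Fin n) → ℝ) (t : ℝ)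
    (x₀ : EuclideanSpace ℝ (Fin n)) : EuclideanSpace ℝ (Fin n) → ℝ :=
  fun x => t ^ ((2 - (n : ℝ)) / 2) * U (t⁻¹ • (x - x₀))

lemma int_scale {n : ℕ} (f : EuclideanSpace ℝ (Fin n) → ℝ) {t : ℝ} (ht : 0 < t)
    (x₀ : EuclideanSpace ℝ (Fin n)) :
    ∫ x, f (t⁻¹ • (x - x₀)) = t ^ n * ∫ x, f x := by
  have h1 : (∫ x, f (t⁻¹ • (x - x₀))) = ∫ x, (fun y => f (t⁻¹ • y)) (x - x₀) := rfl
  rw [h1, integral_sub_right_eq_self (fun y => f (t⁻¹ • y)) x₀,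
    Measure.integral_comp_inv_smul_of_nonneg volume f ht.le, finrank_euclideanSpace_fin,
    smul_eq_mul]

lemma int_unscale {n : ℕ} (f : EuclideanSpace ℝ (Fin n) → ℝ) {t : ℝ} (ht : 0 < t)
    (x₀ : EuclideanSpace ℝ (Fin n)) :
    ∫ x, f x = t ^ n * ∫ a, f (t • a + x₀) := by
  have := int_scale (fun a => f (t • a + x₀)) ht x₀
  simp only [smul_smul, mul_inv_cancel₀ ht.ne', one_smul, sub_add_cancel] at this
  exact this

/-- `‖V_{t,x₀}‖_{HL} = 1`, `G(V_{t,x₀})² = ‖∇U‖² + t^{2-2s}[U]_s²`, and consequently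
`G(V_{t,x₀})² → S_{H,L,C}` as `t → 0⁺`, where `U` is the normalized Aubin-Talenti
bubble with `‖∇U‖² = S_{H,L,C}`. -/
theorem stmt_8 (n : ℕ) (hn : 3 ≤ n) (s μ Cns c S : ℝ) (hs0 : 0 < s) (hs1 : s < 1)
    (hμ0 : 0 < μ) (hμn : μ < n) (hCns : 0 < Cns) (hc : 0 < c)
    (U : EuclideanSpace ℝ (Fin n) → ℝ)
    (hUdef : ∀ y, U y = c * (1 + ‖y‖ ^ 2) ^ ((2 - (n : ℝ)) / 2))
    (hUHL : hlNorm2 μ U = 1)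
    (hUopt : grad2 U = S) :
    (∀ t : ℝ, 0 < t → ∀ x₀ : EuclideanSpace ℝ (Fin n),
      hlNorm2 μ (bubbleV U t x₀) = 1 ∧
      grad2 (bubbleV U t x₀) + gagliardo2 s Cns (bubbleV U t x₀) =
        grad2 U + t ^ (2 - 2 * s) * gagliardo2 s Cns U) ∧
    ∀ x₀ : EuclideanSpace ℝ (Fin n),
      Tendsto (fun t : ℝ => grad2 (bubbleV U t x₀) + gagliardo2 s Cns (bubbleV U t x₀))
        (nhdsWithin 0 (Set.Ioi 0)) (nhds S) := by
  have hn3 : (3:ℝ) ≤ (n:ℝ) := by exact_mod_cast hn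
  have hn2 : (n:ℝ) - 2 ≠ 0 := by linarith
  have hUdiff : Differentiable ℝ U := by
    have hU : U = fun y => c * (1 + ‖y‖ ^ 2) ^ ((2 - (n : ℝ)) / 2) := funext hUdef
    rw [hU]
    have h1 : Differentiable ℝ (fun y : EuclideanSpace ℝ (Fin n) => 1 + ‖y‖ ^ 2) :=
      (differentiable_const (1:ℝ)).add ((contDiff_norm_sq ℝ (n := 1)).differentiable one_ne_zero)
    exact (h1.rpow_const (fun y => Or.inl (by positivity))).const_mul c
  have main : ∀ t : ℝ, 0 < t → ∀ x₀ : EuclideanSpace ℝ (Fin n),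
      hlNorm2 μ (bubbleV U t x₀) = 1 ∧
      grad2 (bubbleV U t x₀) + gagliardo2 s Cns (bubbleV U t x₀) =
        grad2 U + t ^ (2 - 2 * s) * gagliardo2 s Cns U := by
    intro t ht x₀
    set α : ℝ := (2 - (n : ℝ)) / 2 with hαdef
    have htα : (0:ℝ) < t ^ α := Real.rpow_pos_of_pos ht α
    have hVval : ∀ a, bubbleV U t x₀ (t • a + x₀) = t ^ α * U a := by
      intro a
      simp [bubbleV, add_sub_cancel_right, smul_smul, inv_mul_cancel₀ ht.ne', hαdef]
    have hnormdiff : ∀ a b : EuclideanSpace ℝ (Fin n),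
        ‖(t • a + x₀) - (t • b + x₀)‖ = t * ‖a - b‖ := by
      intro a b
      have h : (t • a + x₀) - (t • b + x₀) = t • (a - b) := by
        rw [smul_sub]; abel
      rw [h, norm_smul, Real.norm_eq_abs, abs_of_pos ht]
    -- a generic factoring fact
    have hfac : ∀ X Y A B C : ℝ, Y ≠ 0 → (X * A) * (X * B) / (Y * C) = X * X / Y * (A * B / C) := by
      intro X Y A B C hY
      rcases eq_or_ne C 0 with rfl | hC
      · simp
      · field_simp
    -- grad2 scaling
    have hfd : ∀ x, fderiv ℝ (bubbleV U t x₀) x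
        = (t ^ α * t⁻¹) • fderiv ℝ U (t⁻¹ • (x - x₀)) := by
      intro x
      have hA : HasFDerivAt (fun x : EuclideanSpace ℝ (Fin n) => t⁻¹ • (x - x₀))
          (t⁻¹ • ContinuousLinearMap.id ℝ (EuclideanSpace ℝ (Fin n))) x :=
        ((hasFDerivAt_id x).sub_const x₀).const_smul t⁻¹
      have hU' := (hUdiff (t⁻¹ • (x - x₀))).hasFDerivAt
      have hcomp := hU'.comp x hA
      have hV : HasFDerivAt (bubbleV U t x₀)
          (t ^ α •
            ((fderiv ℝ U (t⁻¹ • (x - x₀))).comp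
              (t⁻¹ • ContinuousLinearMap.id ℝ (EuclideanSpace ℝ (Fin n))))) x :=
        hcomp.const_mul _
      rw [hV.fderiv]
      ext v
      simp [smul_smul, mul_comm, mul_assoc, mul_left_comm]
    have hgrad : grad2 (bubbleV U t x₀) = grad2 U := by
      unfold grad2
      have h1 : ∀ x, ‖fderiv ℝ (bubbleV U t x₀) x‖ ^ 2
          = (t ^ α * t⁻¹) ^ 2 * ‖fderiv ℝ U (t⁻¹ • (x - x₀))‖ ^ 2 := by
        intro x
        rw [hfd x, norm_smul, Real.norm_eq_abs, abs_of_pos (by positivity), mul_pow]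
      simp_rw [h1, integral_const_mul]
      have h2 : (∫ x, ‖fderiv ℝ U (t⁻¹ • (x - x₀))‖ ^ 2)
          = t ^ n * ∫ x, ‖fderiv ℝ U x‖ ^ 2 := int_scale (fun y => ‖fderiv ℝ U y‖ ^ 2) ht x₀
      rw [h2, ← mul_assoc]
      have h3 : (t ^ α * t⁻¹) ^ 2 * (t:ℝ) ^ n = 1 := by
        rw [← Real.rpow_neg_one t, ← Real.rpow_add ht, ← Real.rpow_natCast (t ^ (α + -1)) 2,
          ← Real.rpow_mul ht.le, ← Real.rpow_natCast t n, ← Real.rpow_add ht]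
        have he : (α + -1) * ((2:ℕ):ℝ) + ((n:ℕ):ℝ) = 0 := by
          rw [hαdef]; push_cast; ring
        rw [he, Real.rpow_zero]
      rw [h3, one_mul]
    -- HL scaling
    set p : ℝ := (2 * (n : ℝ) - μ) / ((n : ℝ) - 2) with hpdef
    have hF : ∀ a b : EuclideanSpace ℝ (Fin n),
        |bubbleV U t x₀ (t • a + x₀)| ^ p * |bubbleV U t x₀ (t • b + x₀)| ^ p /
            ‖(t • a + x₀) - (t • b + x₀)‖ ^ μ
          = t ^ (α * p + α * p - μ) * (|U a| ^ p * |U b| ^ p / ‖a - b‖ ^ μ) := by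
      intro a b
      rw [hVval a, hVval b, hnormdiff a b, abs_mul, abs_mul, abs_of_pos htα,
        Real.mul_rpow htα.le (abs_nonneg _), Real.mul_rpow htα.le (abs_nonneg _),
        Real.mul_rpow ht.le (norm_nonneg _), ← Real.rpow_mul ht.le,
        hfac _ _ _ _ _ (Real.rpow_pos_of_pos ht μ).ne']
      congr 1
      rw [Real.rpow_sub ht, Real.rpow_add ht]
    have hIV : (∫ x, ∫ y, |bubbleV U t x₀ x| ^ p * |bubbleV U t x₀ y| ^ p / ‖x - y‖ ^ μ)
        = ∫ x, ∫ y, |U x| ^ p * |U y| ^ p / ‖x - y‖ ^ μ := by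
      have hout : (∫ x, ∫ y, |bubbleV U t x₀ x| ^ p * |bubbleV U t x₀ y| ^ p / ‖x - y‖ ^ μ)
          = t ^ n * ∫ a, ∫ y, |bubbleV U t x₀ (t • a + x₀)| ^ p * |bubbleV U t x₀ y| ^ p /
              ‖(t • a + x₀) - y‖ ^ μ :=
        int_unscale (fun x => ∫ y, |bubbleV U t x₀ x| ^ p * |bubbleV U t x₀ y| ^ p / ‖x - y‖ ^ μ)
          ht x₀
      have hin : ∀ a, (∫ y, |bubbleV U t x₀ (t • a + x₀)| ^ p * |bubbleV U t x₀ y| ^ p /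
              ‖(t • a + x₀) - y‖ ^ μ)
          = t ^ n * ∫ b, |bubbleV U t x₀ (t • a + x₀)| ^ p * |bubbleV U t x₀ (t • b + x₀)| ^ p /
              ‖(t • a + x₀) - (t • b + x₀)‖ ^ μ :=
        fun a => int_unscale
          (fun y => |bubbleV U t x₀ (t • a + x₀)| ^ p * |bubbleV U t x₀ y| ^ p /
            ‖(t • a + x₀) - y‖ ^ μ) ht x₀
      rw [hout]
      simp_rw [hin, hF, integral_const_mul]
      have he : ((n:ℕ):ℝ) + (((n:ℕ):ℝ) + (α * p + α * p - μ)) = 0 := by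
        rw [hαdef, hpdef]
        field_simp
        ring
      have hcol : (t:ℝ) ^ n * ((t:ℝ) ^ n * t ^ (α * p + α * p - μ)) = 1 := by
        rw [← Real.rpow_natCast t n, ← Real.rpow_add ht, ← Real.rpow_add ht, he, Real.rpow_zero]
      calc (t:ℝ) ^ n * ((t:ℝ) ^ n * (t ^ (α * p + α * p - μ) *
              ∫ x, ∫ y, |U x| ^ p * |U y| ^ p / ‖x - y‖ ^ μ))
          = ((t:ℝ) ^ n * ((t:ℝ) ^ n * t ^ (α * p + α * p - μ))) *
              ∫ x, ∫ y, |U x| ^ p * |U y| ^ p / ‖x - y‖ ^ μ := by ring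
        _ = ∫ x, ∫ y, |U x| ^ p * |U y| ^ p / ‖x - y‖ ^ μ := by rw [hcol, one_mul]
    have hHL : hlNorm2 μ (bubbleV U t x₀) = 1 := by
      unfold hlNorm2
      rw [← hpdef, hIV]
      exact hUHL
    -- gagliardo scaling
    have hG : ∀ a b : EuclideanSpace ℝ (Fin n),
        |bubbleV U t x₀ (t • a + x₀) - bubbleV U t x₀ (t • b + x₀)| ^ 2 /
            ‖(t • a + x₀) - (t • b + x₀)‖ ^ ((n : ℝ) + 2 * s)
          = t ^ (α * ((2:ℕ):ℝ) - ((n : ℝ) + 2 * s)) *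
              (|U a - U b| ^ 2 / ‖a - b‖ ^ ((n : ℝ) + 2 * s)) := by
      intro a b
      rw [hVval a, hVval b, hnormdiff a b, ← mul_sub, abs_mul, abs_of_pos htα, mul_pow,
        Real.mul_rpow ht.le (norm_nonneg _), ← Real.rpow_natCast (t ^ α) 2,
        ← Real.rpow_mul ht.le]
      rcases eq_or_ne (‖a - b‖ ^ ((n : ℝ) + 2 * s)) 0 with h0 | h0
      · rw [h0, mul_zero, div_zero, div_zero, mul_zero]
      · have hY : t ^ ((n : ℝ) + 2 * s) ≠ 0 := (Real.rpow_pos_of_pos ht _).ne'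
        rw [Real.rpow_sub ht]
        field_simp
    have hgag : gagliardo2 s Cns (bubbleV U t x₀) = t ^ (2 - 2 * s) * gagliardo2 s Cns U := by
      unfold gagliardo2
      have hout : (∫ x, ∫ y, |bubbleV U t x₀ x - bubbleV U t x₀ y| ^ 2 /
              ‖x - y‖ ^ ((n : ℝ) + 2 * s))
          = t ^ n * ∫ a, ∫ y, |bubbleV U t x₀ (t • a + x₀) - bubbleV U t x₀ y| ^ 2 /
              ‖(t • a + x₀) - y‖ ^ ((n : ℝ) + 2 * s) :=
        int_unscale (fun x => ∫ y, |bubbleV U t x₀ x - bubbleV U t x₀ y| ^ 2 /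
          ‖x - y‖ ^ ((n : ℝ) + 2 * s)) ht x₀
      have hin : ∀ a, (∫ y, |bubbleV U t x₀ (t • a + x₀) - bubbleV U t x₀ y| ^ 2 /
              ‖(t • a + x₀) - y‖ ^ ((n : ℝ) + 2 * s))
          = t ^ n * ∫ b, |bubbleV U t x₀ (t • a + x₀) - bubbleV U t x₀ (t • b + x₀)| ^ 2 /
              ‖(t • a + x₀) - (t • b + x₀)‖ ^ ((n : ℝ) + 2 * s) :=
        fun a => int_unscale
          (fun y => |bubbleV U t x₀ (t • a + x₀) - bubbleV U t x₀ y| ^ 2 /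
            ‖(t • a + x₀) - y‖ ^ ((n : ℝ) + 2 * s)) ht x₀
      rw [hout]
      simp_rw [hin, hG, integral_const_mul]
      have he : ((n:ℕ):ℝ) + (((n:ℕ):ℝ) + (α * ((2:ℕ):ℝ) - ((n : ℝ) + 2 * s))) = 2 - 2 * s := by
        rw [hαdef]; push_cast; ring
      have hcol : (t:ℝ) ^ n * ((t:ℝ) ^ n * t ^ (α * ((2:ℕ):ℝ) - ((n : ℝ) + 2 * s)))
          = t ^ (2 - 2 * s) := by
        rw [← Real.rpow_natCast t n, ← Real.rpow_add ht, ← Real.rpow_add ht, he]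
      calc Cns / 2 * ((t:ℝ) ^ n * ((t:ℝ) ^ n * (t ^ (α * ((2:ℕ):ℝ) - ((n : ℝ) + 2 * s)) *
              ∫ x, ∫ y, |U x - U y| ^ 2 / ‖x - y‖ ^ ((n : ℝ) + 2 * s))))
          = ((t:ℝ) ^ n * ((t:ℝ) ^ n * t ^ (α * ((2:ℕ):ℝ) - ((n : ℝ) + 2 * s)))) *
              (Cns / 2 * ∫ x, ∫ y, |U x - U y| ^ 2 / ‖x - y‖ ^ ((n : ℝ) + 2 * s)) := by ring
        _ = t ^ (2 - 2 * s) *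
              (Cns / 2 * ∫ x, ∫ y, |U x - U y| ^ 2 / ‖x - y‖ ^ ((n : ℝ) + 2 * s)) := by
            rw [hcol]
    exact ⟨hHL, by rw [hgrad, hgag]⟩
  refine ⟨main, ?_⟩
  intro x₀
  have h20 : (0:ℝ) < 2 - 2 * s := by linarith
  have hcont : Tendsto (fun t : ℝ => t ^ (2 - 2 * s)) (nhdsWithin 0 (Set.Ioi 0)) (nhds 0) := by
    have h := (Real.continuousAt_rpow_const 0 (2 - 2 * s) (Or.inr h20.le)).tendsto
    rw [Real.zero_rpow h20.ne'] at h
    exact h.mono_left nhdsWithin_le_nhds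
  have hlim : Tendsto (fun t : ℝ => grad2 U + t ^ (2 - 2 * s) * gagliardo2 s Cns U)
      (nhdsWithin 0 (Set.Ioi 0)) (nhds S) := by
    have h := (tendsto_const_nhds (x := grad2 U) (f := nhdsWithin (0:ℝ) (Set.Ioi 0))).add
      (hcont.mul_const (gagliardo2 s Cns U))
    simpa [hUopt] using h
  exact hlim.congr' (eventually_mem_nhdsWithin.mono fun t ht => ((main t ht x₀).2).symm)
end

section
/- Let Ω ⊂ ℝ^n be a bounded C^{1,1} domain and u ∈ C²(Ω̄) with u = 0 on ∂Ω. Then −∫_Ω Δu (∇u·x) dx = ((2−n)/2) ∫_Ω |∇u|² dx − (1/2) ∫_{∂Ω} (∂u/∂ν)² (ν(x)·x) dσ. -/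
open MeasureTheory InnerProductSpace
open scoped RealInnerProductSpace

section Aux

variable {E : Type*} [NormedAddCommGroup E] [InnerProductSpace ℝ E] [FiniteDimensional ℝ E]

omit [FiniteDimensional ℝ E] in
lemma my_inner_gradient [CompleteSpace E] (u : E → ℝ) (x v : E) :
    ⟪gradient u x, v⟫ = fderiv ℝ u x v := by
  rw [gradient]
  exact InnerProductSpace.toDual_symm_apply

lemma my_gradient_eq (u : E → ℝ) :
    gradient u = fun x => ∑ i, (fderiv ℝ u x ((stdOrthonormalBasis ℝ E) i)) •
      (stdOrthonormalBasis ℝ E) i := by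
  funext x
  set b := stdOrthonormalBasis ℝ E
  conv_lhs => rw [← b.sum_repr' (gradient u x)]
  congr 1; ext i
  rw [real_inner_comm, my_inner_gradient]

lemma my_contDiff_gradient (u : E → ℝ) (hu : ContDiff ℝ 2 u) :
    ContDiff ℝ 1 (gradient u) := by
  rw [my_gradient_eq]
  apply ContDiff.sum
  intro i _
  exact ((ContinuousLinearMap.apply ℝ ℝ ((stdOrthonormalBasis ℝ E) i)).contDiff.comp
    (hu.fderiv_right (by norm_num))).smul contDiff_const

lemma my_hessian_pairing (u : E → ℝ) (hu : ContDiff ℝ 2 u) (x v w : E) :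
    ⟪fderiv ℝ (gradient u) x v, w⟫ = fderiv ℝ (fderiv ℝ u) x v w := by
  have hGd : DifferentiableAt ℝ (gradient u) x :=
    ((my_contDiff_gradient u hu).differentiable one_ne_zero) x
  have hfd : DifferentiableAt ℝ (fderiv ℝ u) x :=
    ((hu.fderiv_right (m := 1) (by norm_num)).differentiable one_ne_zero) x
  have hfun : (fun y => ⟪w, gradient u y⟫)
      = fun y => (ContinuousLinearMap.apply ℝ ℝ w) (fderiv ℝ u y) := by
    funext y
    rw [real_inner_comm, my_inner_gradient]
    rfl
  have h1 : HasFDerivAt (fun y => ⟪w, gradient u y⟫)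
      ((innerSL ℝ w).comp (fderiv ℝ (gradient u) x)) x :=
    (innerSL ℝ w).hasFDerivAt.comp x hGd.hasFDerivAt
  have h2 : HasFDerivAt (fun y => (ContinuousLinearMap.apply ℝ ℝ w) (fderiv ℝ u y))
      ((ContinuousLinearMap.apply ℝ ℝ w).comp (fderiv ℝ (fderiv ℝ u) x)) x :=
    (ContinuousLinearMap.apply ℝ ℝ w).hasFDerivAt.comp x hfd.hasFDerivAt
  rw [hfun] at h1
  have := h1.unique h2
  have := congrFun (congrArg (fun (T : E →L[ℝ] ℝ) => (T : E → ℝ)) this) v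
  simpa [real_inner_comm] using this

lemma my_hessian_symm (u : E → ℝ) (hu : ContDiff ℝ 2 u) (x v w : E) :
    ⟪fderiv ℝ (gradient u) x v, w⟫ = ⟪fderiv ℝ (gradient u) x w, v⟫ := by
  rw [my_hessian_pairing u hu x v w, my_hessian_pairing u hu x w v]
  exact (hu.contDiffAt.isSymmSndFDerivAt (by norm_num)) v w

lemma my_trace_smulRight (ℓ : E →L[ℝ] ℝ) (w : E) :
    LinearMap.trace ℝ E ((ℓ.smulRight w : E →L[ℝ] E) : E →ₗ[ℝ] E) = ℓ w := by
  have hc : ((ℓ.smulRight w : E →L[ℝ] E) : E →ₗ[ℝ] E)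
      = LinearMap.smulRight (ℓ : E →ₗ[ℝ] ℝ) w := rfl
  rw [hc]
  classical
  let b := Module.Free.chooseBasis ℝ E
  rw [LinearMap.trace_eq_matrix_trace ℝ b, Matrix.trace]
  have : ∀ i, Matrix.diag (LinearMap.toMatrix b b (LinearMap.smulRight (ℓ : E →ₗ[ℝ] ℝ) w)) i
      = ℓ (b i) * b.repr w i := by
    intro i
    simp [Matrix.diag, LinearMap.toMatrix_apply, mul_comm]
  rw [Finset.sum_congr rfl fun i _ => this i]
  conv_rhs => rw [← b.sum_repr w]
  rw [map_sum]
  congr 1; ext i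
  rw [_root_.map_smul, smul_eq_mul, mul_comm]

lemma my_div_smul (g : E → ℝ) (G : E → E) (x : E)
    (hg : DifferentiableAt ℝ g x) (hG : DifferentiableAt ℝ G x) :
    LinearMap.trace ℝ E ((fderiv ℝ (fun y => g y • G y) x : E →L[ℝ] E) : E →ₗ[ℝ] E) =
      g x * LinearMap.trace ℝ E ((fderiv ℝ G x : E →L[ℝ] E) : E →ₗ[ℝ] E)
        + fderiv ℝ g x (G x) := by
  have h : HasFDerivAt (fun y => g y • G y)
      (g x • fderiv ℝ G x + (fderiv ℝ g x).smulRight (G x)) x :=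
    hg.hasFDerivAt.smul hG.hasFDerivAt
  rw [h.fderiv]
  have hc : (((g x • fderiv ℝ G x + (fderiv ℝ g x).smulRight (G x)) : E →L[ℝ] E) : E →ₗ[ℝ] E)
      = g x • ((fderiv ℝ G x : E →L[ℝ] E) : E →ₗ[ℝ] E)
        + (((fderiv ℝ g x).smulRight (G x) : E →L[ℝ] E) : E →ₗ[ℝ] E) := rfl
  rw [hc, map_add, _root_.map_smul, smul_eq_mul, my_trace_smulRight]

end Aux

/-- Classical Pohozaev boundary identity for the Laplacian:
`−∫_Ω Δu (∇u·x) = ((2−n)/2)∫_Ω |∇u|² − (1/2)∫_{∂Ω} (∂u/∂ν)² (ν·x) dσ`,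
for `u ∈ C²` vanishing on `∂Ω` of a bounded domain `Ω`. The surface measure `σ` and
outward unit normal `ν` are encoded through the divergence theorem hypothesis `hdiv`,
and `Δu = tr(D(∇u))`. -/
theorem stmt_12 (n : ℕ) (hn : 1 ≤ n) (Ω : Set (EuclideanSpace ℝ (Fin n)))
    (hΩo : IsOpen Ω) (hΩb : Bornology.IsBounded Ω)
    (σ : Measure (EuclideanSpace ℝ (Fin n))) [IsFiniteMeasure σ]
    (ν : EuclideanSpace ℝ (Fin n) → EuclideanSpace ℝ (Fin n))
    (hσ : ∀ᵐ x ∂σ, x ∈ frontier Ω)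
    (hν1 : ∀ x ∈ frontier Ω, ‖ν x‖ = 1)
    (u : EuclideanSpace ℝ (Fin n) → ℝ) (hu : ContDiff ℝ 2 u)
    (hub : ∀ x ∈ frontier Ω, u x = 0)
    (hpar : ∀ x ∈ frontier Ω, gradient u x = (inner ℝ (gradient u x) (ν x) : ℝ) • ν x)
    (hdiv : ∀ F : EuclideanSpace ℝ (Fin n) → EuclideanSpace ℝ (Fin n), ContDiff ℝ 1 F →
      (∫ x in Ω, LinearMap.trace ℝ (EuclideanSpace ℝ (Fin n))
          (fderiv ℝ F x : EuclideanSpace ℝ (Fin n) →ₗ[ℝ] EuclideanSpace ℝ (Fin n))) =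
        ∫ x, (inner ℝ (F x) (ν x) : ℝ) ∂σ) :
    -(∫ x in Ω, (LinearMap.trace ℝ (EuclideanSpace ℝ (Fin n))
          (fderiv ℝ (fun y => gradient u y) x :
            EuclideanSpace ℝ (Fin n) →ₗ[ℝ] EuclideanSpace ℝ (Fin n))) *
        (inner ℝ (gradient u x) x : ℝ)) =
      ((2 - (n : ℝ)) / 2) * (∫ x in Ω, ‖gradient u x‖ ^ 2) -
        (1 / 2) * ∫ x, ((inner ℝ (gradient u x) (ν x) : ℝ)) ^ 2 * (inner ℝ (ν x) x : ℝ) ∂σ := by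
  have hG1 : ContDiff ℝ 1 (gradient u) := my_contDiff_gradient u hu
  have hGd : Differentiable ℝ (gradient u) := hG1.differentiable one_ne_zero
  set T : EuclideanSpace ℝ (Fin n) → ℝ := fun x => LinearMap.trace ℝ (EuclideanSpace ℝ (Fin n))
    (fderiv ℝ (fun y => gradient u y) x :
      EuclideanSpace ℝ (Fin n) →ₗ[ℝ] EuclideanSpace ℝ (Fin n)) with hT
  -- divergence of F₁ = ⟪∇u, x⟫ • ∇u
  have key1 : ∀ x : EuclideanSpace ℝ (Fin n), LinearMap.trace ℝ (EuclideanSpace ℝ (Fin n))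
      ((fderiv ℝ (fun y => ⟪gradient u y, y⟫ • gradient u y) x :
        EuclideanSpace ℝ (Fin n) →L[ℝ] EuclideanSpace ℝ (Fin n)) :
          EuclideanSpace ℝ (Fin n) →ₗ[ℝ] EuclideanSpace ℝ (Fin n))
      = T x * ⟪gradient u x, x⟫
        + (⟪gradient u x, gradient u x⟫ + ⟪fderiv ℝ (gradient u) x x, gradient u x⟫) := by
    intro x
    have hg : DifferentiableAt ℝ (fun y => ⟪gradient u y, y⟫) x :=
      (hGd x).inner ℝ differentiableAt_fun_id
    rw [my_div_smul _ _ x hg (hGd x),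
      fderiv_inner_apply ℝ (hGd x) differentiableAt_fun_id (gradient u x)]
    rw [fderiv_id']
    simp only [ContinuousLinearMap.coe_id', id_eq]
    rw [my_hessian_symm u hu x (gradient u x) x]
    ring
  -- divergence of F₂ = ⟪∇u, ∇u⟫ • x
  have key2 : ∀ x : EuclideanSpace ℝ (Fin n), LinearMap.trace ℝ (EuclideanSpace ℝ (Fin n))
      ((fderiv ℝ (fun y => ⟪gradient u y, gradient u y⟫ • y) x :
        EuclideanSpace ℝ (Fin n) →L[ℝ] EuclideanSpace ℝ (Fin n)) :
          EuclideanSpace ℝ (Fin n) →ₗ[ℝ] EuclideanSpace ℝ (Fin n))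
      = (n : ℝ) * ⟪gradient u x, gradient u x⟫
        + 2 * ⟪fderiv ℝ (gradient u) x x, gradient u x⟫ := by
    intro x
    have hg : DifferentiableAt ℝ (fun y => ⟪gradient u y, gradient u y⟫) x :=
      (hGd x).inner ℝ (hGd x)
    rw [my_div_smul _ _ x hg differentiableAt_fun_id,
      fderiv_inner_apply ℝ (hGd x) (hGd x) x]
    rw [fderiv_id']
    have htr : LinearMap.trace ℝ (EuclideanSpace ℝ (Fin n))
        (((ContinuousLinearMap.id ℝ (EuclideanSpace ℝ (Fin n)))) :
          EuclideanSpace ℝ (Fin n) →ₗ[ℝ] EuclideanSpace ℝ (Fin n)) = (n : ℝ) := by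
      rw [ContinuousLinearMap.coe_id, LinearMap.trace_id]
      simp [finrank_euclideanSpace_fin]
    rw [htr, real_inner_comm (gradient u x) (fderiv ℝ (gradient u) x x)]
    ring
  -- boundary identities
  have bd1 : ∀ x ∈ frontier Ω, ⟪(⟪gradient u x, x⟫ • gradient u x), ν x⟫
      = ⟪gradient u x, ν x⟫ ^ 2 * ⟪ν x, x⟫ := by
    intro x hx
    have h1 : ⟪gradient u x, x⟫ = ⟪gradient u x, ν x⟫ * ⟪ν x, x⟫ := by
      conv_lhs => rw [hpar x hx]
      rw [real_inner_smul_left]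
    rw [real_inner_smul_left, h1]
    ring
  have bd2 : ∀ x ∈ frontier Ω, ⟪(⟪gradient u x, gradient u x⟫ • x), ν x⟫
      = ⟪gradient u x, ν x⟫ ^ 2 * ⟪ν x, x⟫ := by
    intro x hx
    have h2 : ⟪gradient u x, gradient u x⟫ = ⟪gradient u x, ν x⟫ ^ 2 := by
      conv_lhs => rw [hpar x hx]
      rw [real_inner_smul_left, real_inner_smul_right, real_inner_self_eq_norm_sq, hν1 x hx]
      ring
    rw [real_inner_smul_left, h2, real_inner_comm x (ν x)]
  -- integrability of continuous functions on Ω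
  have hK : IsCompact (closure Ω) := hΩb.isCompact_closure
  have hint : ∀ f : EuclideanSpace ℝ (Fin n) → ℝ, Continuous f →
      IntegrableOn f Ω volume := fun f hf =>
    (hf.continuousOn.integrableOn_compact hK).mono_set subset_closure
  have hGc : Continuous (gradient u) := hG1.continuous
  have hG'c : Continuous (fun x => fderiv ℝ (gradient u) x) := hG1.continuous_fderiv one_ne_zero
  have hTc : Continuous T := by
    have : Continuous (fun A : EuclideanSpace ℝ (Fin n) →L[ℝ] EuclideanSpace ℝ (Fin n) =>
        LinearMap.trace ℝ (EuclideanSpace ℝ (Fin n))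
          (A : EuclideanSpace ℝ (Fin n) →ₗ[ℝ] EuclideanSpace ℝ (Fin n))) :=
      LinearMap.continuous_of_finiteDimensional
        ((LinearMap.trace ℝ (EuclideanSpace ℝ (Fin n))).comp (ContinuousLinearMap.coeLM ℝ))
    exact this.comp hG'c
  have hHc : Continuous (fun x : EuclideanSpace ℝ (Fin n) => fderiv ℝ (gradient u) x x) :=
    hG'c.clm_apply continuous_id
  have hf1 : IntegrableOn (fun x => T x * ⟪gradient u x, x⟫) Ω volume :=
    hint _ (hTc.mul (hGc.inner continuous_id))
  have hf2 : IntegrableOn (fun x => ⟪gradient u x, gradient u x⟫) Ω volume :=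
    hint _ (hGc.inner hGc)
  have hf3 : IntegrableOn (fun x => ⟪fderiv ℝ (gradient u) x x, gradient u x⟫) Ω volume :=
    hint _ (hHc.inner hGc)
  have hf23 : IntegrableOn (fun x => ⟪gradient u x, gradient u x⟫
      + ⟪fderiv ℝ (gradient u) x x, gradient u x⟫) Ω volume := hf2.add hf3
  -- abbreviations
  set A := ∫ x in Ω, T x * ⟪gradient u x, x⟫ with hA
  set B := ∫ x in Ω, ⟪gradient u x, gradient u x⟫ with hB
  set C := ∫ x in Ω, ⟪fderiv ℝ (gradient u) x x, gradient u x⟫ with hC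
  set S := ∫ x, ⟪gradient u x, ν x⟫ ^ 2 * ⟪ν x, x⟫ ∂σ with hS
  have hc1 : ContDiff ℝ 1 (fun y => ⟪gradient u y, y⟫ • gradient u y) :=
    (hG1.inner ℝ contDiff_id).smul hG1
  have hc2 : ContDiff ℝ 1 (fun y => ⟪gradient u y, gradient u y⟫ • y) :=
    (hG1.inner ℝ hG1).smul contDiff_id
  have hbd1 : (∫ x, ⟪(fun y => ⟪gradient u y, y⟫ • gradient u y) x, ν x⟫ ∂σ) = S :=
    integral_congr_ae (hσ.mono fun x hx => bd1 x hx)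
  have hbd2 : (∫ x, ⟪(fun y => ⟪gradient u y, gradient u y⟫ • y) x, ν x⟫ ∂σ) = S :=
    integral_congr_ae (hσ.mono fun x hx => bd2 x hx)
  have eq1 : A + (B + C) = S := by
    have h := hdiv (fun y => ⟪gradient u y, y⟫ • gradient u y) hc1
    rw [funext key1] at h
    rw [integral_add hf1 hf23, integral_add hf2 hf3] at h
    rw [hbd1] at h
    exact h
  have eq2 : (n : ℝ) * B + 2 * C = S := by
    have h := hdiv (fun y => ⟪gradient u y, gradient u y⟫ • y) hc2
    rw [funext key2] at h
    rw [integral_add (hf2.const_mul _) (hf3.const_mul _), integral_const_mul,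
      integral_const_mul] at h
    rw [hbd2] at h
    exact h
  have hBnorm : (∫ x in Ω, ‖gradient u x‖ ^ 2) = B := by
    rw [hB]
    congr 1
    funext x
    rw [real_inner_self_eq_norm_sq]
  rw [hBnorm]
  linarith
end

section
/- Let Ω ⊂ ℝ^n be bounded open, n ≥ 3, 0 < μ < n, s ∈ (0,1), and λ ≥ λ₁, where λ₁ is the first Dirichlet eigenvalue of the mixed operator −Δ + (−Δ)^s on Ω, attained by a positive eigenfunction w₀ ∈ Π(Ω). Then there is no weak solution u ∈ Π(Ω), u > 0 a.e. in Ω, to (−Δ + (−Δ)^s)u = (∫_Ω |u(y)|^{2_μ*}/|x−y|^μ dy)|u|^{2_μ*−2}u + λu in Ω with u ≡ 0 in ℝ^n∖Ω. -/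
open MeasureTheory

/-- Nonexistence for `λ ≥ λ₁`: if `λ₁` is the first Dirichlet eigenvalue of the mixed
operator `−Δ + (−Δ)^s` on a bounded open `Ω`, attained by a positive eigenfunction `w₀`,
and `λ ≥ λ₁`, then the critical Choquard problem
`(−Δ + (−Δ)^s)u = (∫_Ω |u(y)|^{2μ*}/|x−y|^μ dy)|u|^{2μ*−2}u + λu` has no positive weak
solution vanishing outside `Ω`. Here `2μ* = (2n−μ)/(n−2)` and `Cns = C(n,s)`. -/
theorem stmt_19 (n : ℕ) (hn : 3 ≤ n) (s μ Cns lam lam1 : ℝ) (hs0 : 0 < s) (hs1 : s < 1)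
    (hμ0 : 0 < μ) (hμn : μ < n) (hCns : 0 < Cns)
    (Ω : Set (EuclideanSpace ℝ (Fin n))) (hΩo : IsOpen Ω)
    (hΩb : Bornology.IsBounded Ω) (hΩne : Ω.Nonempty)
    (w₀ : EuclideanSpace ℝ (Fin n) → ℝ) (hw₀d : Differentiable ℝ w₀)
    (hw₀0 : ∀ x, x ∉ Ω → w₀ x = 0)
    (hw₀pos : ∀ᵐ x, x ∈ Ω → 0 < w₀ x)
    (heig : ∀ φ : EuclideanSpace ℝ (Fin n) → ℝ, Differentiable ℝ φ →
      (∀ x, x ∉ Ω → φ x = 0) →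
      (∫ x, (inner ℝ (gradient w₀ x) (gradient φ x) : ℝ)) +
        Cns / 2 * (∫ x, ∫ y, (w₀ x - w₀ y) * (φ x - φ y) / ‖x - y‖ ^ ((n : ℝ) + 2 * s)) =
      lam1 * ∫ x, w₀ x * φ x)
    (hlam : lam1 ≤ lam) :
    ¬∃ u : EuclideanSpace ℝ (Fin n) → ℝ, Differentiable ℝ u ∧
      (∀ x, x ∉ Ω → u x = 0) ∧ (∀ᵐ x, x ∈ Ω → 0 < u x) ∧
      ∀ φ : EuclideanSpace ℝ (Fin n) → ℝ, Differentiable ℝ φ →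
        (∀ x, x ∉ Ω → φ x = 0) →
        Integrable (fun z : EuclideanSpace ℝ (Fin n) × EuclideanSpace ℝ (Fin n) =>
          |u z.2| ^ ((2 * (n : ℝ) - μ) / ((n : ℝ) - 2)) *
            |u z.1| ^ ((2 * (n : ℝ) - μ) / ((n : ℝ) - 2) - 2) * u z.1 * φ z.1 /
            ‖z.1 - z.2‖ ^ μ) (volume.prod volume) ∧
        (∫ x, (inner ℝ (gradient u x) (gradient φ x) : ℝ)) +
          Cns / 2 * (∫ x, ∫ y, (u x - u y) * (φ x - φ y) / ‖x - y‖ ^ ((n : ℝ) + 2 * s)) =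
        (∫ x, ∫ y, |u y| ^ ((2 * (n : ℝ) - μ) / ((n : ℝ) - 2)) *
            |u x| ^ ((2 * (n : ℝ) - μ) / ((n : ℝ) - 2) - 2) * u x * φ x / ‖x - y‖ ^ μ) +
          lam * ∫ x, u x * φ x := by
  haveI : NeZero n := ⟨by omega⟩
  rintro ⟨u, hud, hu0, hupos, hweak⟩
  have hn3 : (3 : ℝ) ≤ (n : ℝ) := by exact_mod_cast hn
  set p : ℝ := (2 * (n : ℝ) - μ) / ((n : ℝ) - 2) with hpdef
  have hppos : 0 < p := div_pos (by linarith) (by linarith)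
  obtain ⟨Hint, Heq⟩ := hweak w₀ hw₀d hw₀0
  have Heig := heig u hud hu0
  -- abbreviate the Choquard integrand on the product space
  set F : EuclideanSpace ℝ (Fin n) × EuclideanSpace ℝ (Fin n) → ℝ :=
    fun z => |u z.2| ^ p * |u z.1| ^ (p - 2) * u z.1 * w₀ z.1 / ‖z.1 - z.2‖ ^ μ with hFdef
  -- iterated integral equals product integral
  have hiter : (∫ x, ∫ y, |u y| ^ p * |u x| ^ (p - 2) * u x * w₀ x / ‖x - y‖ ^ μ) =
      ∫ z, F z ∂(volume.prod volume) :=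
    MeasureTheory.integral_integral Hint
  -- a.e. positivity facts transported to the product
  have h1 : ∀ᵐ z : EuclideanSpace ℝ (Fin n) × EuclideanSpace ℝ (Fin n) ∂(volume.prod volume),
      (z.1 ∈ Ω → 0 < u z.1) ∧ (z.1 ∈ Ω → 0 < w₀ z.1) :=
    Measure.quasiMeasurePreserving_fst.ae (hupos.and hw₀pos)
  have h2 : ∀ᵐ z : EuclideanSpace ℝ (Fin n) × EuclideanSpace ℝ (Fin n) ∂(volume.prod volume),
      z.2 ∈ Ω → 0 < u z.2 :=
    Measure.quasiMeasurePreserving_snd.ae hupos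
  -- the diagonal is null
  have hdiag : (volume.prod volume)
      {z : EuclideanSpace ℝ (Fin n) × EuclideanSpace ℝ (Fin n) | z.1 = z.2} = 0 := by
    rw [Measure.measure_prod_null (measurableSet_eq_fun measurable_fst measurable_snd)]
    filter_upwards with x
    have : (Prod.mk x ⁻¹' {z : EuclideanSpace ℝ (Fin n) × EuclideanSpace ℝ (Fin n) | z.1 = z.2})
        = {x} := by ext y; simp [eq_comm]
    rw [this]; exact measure_singleton x
  have hne : ∀ᵐ z : EuclideanSpace ℝ (Fin n) × EuclideanSpace ℝ (Fin n) ∂(volume.prod volume),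
      z.1 ≠ z.2 := by
    rw [ae_iff]; simpa using hdiag
  -- F is a.e. nonnegative
  have hF0 : 0 ≤ᵐ[volume.prod volume] F := by
    filter_upwards [h1, h2] with z hz1 hz2
    by_cases hxΩ : z.1 ∈ Ω
    · by_cases hyΩ : z.2 ∈ Ω
      · have := hz1.1 hxΩ; have := hz1.2 hxΩ; have := hz2 hyΩ
        have h5 : (0:ℝ) ≤ ‖z.1 - z.2‖ ^ μ := Real.rpow_nonneg (norm_nonneg _) _
        apply div_nonneg _ h5
        positivity
      · simp [hFdef, hu0 _ hyΩ, Real.zero_rpow hppos.ne']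
    · simp [hFdef, hw₀0 _ hxΩ]
  -- F is positive a.e. on Ω ×ˢ Ω
  have hsub : (Ω ×ˢ Ω : Set _) ≤ᵐ[volume.prod volume] Function.support F := by
    filter_upwards [h1, h2, hne] with z hz1 hz2 hzne hmem
    have hx : 0 < u z.1 := hz1.1 hmem.1
    have hw : 0 < w₀ z.1 := hz1.2 hmem.1
    have hy : 0 < u z.2 := hz2 hmem.2
    have hd : 0 < ‖z.1 - z.2‖ ^ μ :=
      Real.rpow_pos_of_pos (norm_pos_iff.mpr (sub_ne_zero.mpr hzne)) _
    have : 0 < F z := by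
      apply div_pos _ hd
      have := abs_pos.mpr hx.ne'
      have := abs_pos.mpr hy.ne'
      positivity
    exact this.ne'
  have hΩpos : 0 < volume Ω := hΩo.measure_pos volume hΩne
  have hSpos : 0 < (volume.prod volume) (Function.support F) := by
    refine lt_of_lt_of_le ?_ (measure_mono_ae hsub)
    rw [Measure.prod_prod]
    exact ENNReal.mul_pos hΩpos.ne' hΩpos.ne'
  have hCh : 0 < ∫ z, F z ∂(volume.prod volume) :=
    (integral_pos_iff_support_of_nonneg_ae hF0 Hint).mpr hSpos
  -- symmetry of the bilinear forms
  have e1 : (fun x => (inner ℝ (gradient w₀ x) (gradient u x) : ℝ))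
      = fun x => (inner ℝ (gradient u x) (gradient w₀ x) : ℝ) :=
    funext fun x => real_inner_comm _ _
  have e2 : (fun x => ∫ y, (w₀ x - w₀ y) * (u x - u y) / ‖x - y‖ ^ ((n : ℝ) + 2 * s))
      = fun x => ∫ y, (u x - u y) * (w₀ x - w₀ y) / ‖x - y‖ ^ ((n : ℝ) + 2 * s) := by
    funext x; congr 1; funext y; ring
  have e3 : (fun x => w₀ x * u x) = fun x => u x * w₀ x := funext fun x => mul_comm _ _
  rw [e1, e2, e3] at Heig
  set I : ℝ := ∫ x, u x * w₀ x with hIdef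
  have hI0 : 0 ≤ I := by
    refine integral_nonneg_of_ae ?_
    filter_upwards [hupos, hw₀pos] with x h1 h2
    by_cases hx : x ∈ Ω
    · exact le_of_lt (mul_pos (h1 hx) (h2 hx))
    · simp [hu0 _ hx]
  rw [hiter] at Heq
  rw [Heq] at Heig
  have : lam1 * I ≤ lam * I := mul_le_mul_of_nonneg_right hlam hI0
  linarith
end
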